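/- Let n be a positive integer having at least two distinct prime divisors. Then there do not exist a finite set Q, permutations f_a and f_b of Q that generate a nilpotent subgroup of the symmetric group on Q, and pairwise distinct elements q₁,…,q_{n+1} ∈ Q such that f_a(q_i) = f_b(q_i) = q_{i+1} for all 1 ≤ i ≤ n−1, f_a(q_n) = q₁, and f_b(q_{n+1}) = q₁. (Equivalently: the inverse automaton A_n, and hence any inverse automaton containing A_n as a subgraph, is not G_nil-extendible, i.e., cannot be embedded into a complete automaton whose transition group is a finite nilpotent group.) -/

import Mathlib

namespace SMN

variable {S : Type*}

/-- Mal'cev sequences `(λ_n, ρ_n)`; `z k` plays the role of `z_{k+1}`. -/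
def lr [Mul S] (x y : S) (z : ℕ → S) : ℕ → S × S
  | 0 => (x, y)
  | n + 1 =>
    let p := lr x y z n
    (p.1 * z n * p.2, p.2 * z n * p.1)

/-- Cyclic shift by `k` in `Fin t`. -/
def cyc {t : ℕ} (i : Fin t) (k : ℕ) : Fin t :=
  ⟨(i.val + k) % t, Nat.mod_lt _ i.pos⟩

/-- Strong Mal'cev sequences `λ_{n,i}`; `z k` plays the role of `z_{k+1}`. -/
def slam [Mul S] {t : ℕ} (x : Fin t → S) (z : ℕ → S) : ℕ → Fin t → S
  | 0 => x
  | n + 1 =>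
    let f := slam x z n
    fun i => (List.range (t - 1)).foldl (fun acc j => acc * z n * f (cyc i (j + 1))) (f i)

/-- A semigroup is Mal'cev nilpotent if for some `n ≥ 1`,
`λ_n = ρ_n` for all `x, y ∈ S` and `z₁, …, z_n ∈ S¹`. -/
def MalcevNilpotent (S : Type*) [Semigroup S] : Prop :=
  ∃ n : ℕ, 1 ≤ n ∧ ∀ (x y : S) (z : ℕ → WithOne S),
    (lr (x : WithOne S) (y : WithOne S) z n).1 = (lr (x : WithOne S) (y : WithOne S) z n).2

/-- Strong Mal'cev nilpotency at level `n`. -/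
def SMNAt (S : Type*) [Semigroup S] (n : ℕ) : Prop :=
  ∀ t : ℕ, 2 ≤ t → ∀ (x : Fin t → S) (z : ℕ → WithOne S) (i j : Fin t),
    slam (fun k => (x k : WithOne S)) z n i = slam (fun k => (x k : WithOne S)) z n j

/-- A semigroup is strongly Mal'cev nilpotent if for some `n ≥ 1`, for every `t ≥ 2`,
`λ_{n,1} = ⋯ = λ_{n,t}` for all `x₁, …, x_t ∈ S` and `z₁, …, z_n ∈ S¹`. -/
def StronglyMalcevNilpotent (S : Type*) [Semigroup S] : Prop :=
  ∃ n : ℕ, 1 ≤ n ∧ SMNAt S n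

/-- `y` is an inverse of `x`. -/
def IsInverseOf [Semigroup S] (y x : S) : Prop := x * y * x = x ∧ y * x * y = y

/-- A block group: every element has at most one inverse. -/
def BlockGroup (S : Type*) [Semigroup S] : Prop :=
  ∀ x y₁ y₂ : S, IsInverseOf y₁ x → IsInverseOf y₂ x → y₁ = y₂

/-- All subgroups (subsemigroups which are groups) of `S` are nilpotent. -/
def AllSubgroupsNilpotent (S : Type*) [Semigroup S] : Prop :=
  ∀ (G : Type) [Group G], ∀ φ : G → S,
    (∀ a b : G, φ (a * b) = φ a * φ b) → Function.Injective φ → Group.IsNilpotent G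

/-- All subgroups (subsemigroups which are groups) of `S` are trivial. -/
def AllSubgroupsTrivial (S : Type*) [Semigroup S] : Prop :=
  ∀ (G : Type) [Group G], ∀ φ : G → S,
    (∀ a b : G, φ (a * b) = φ a * φ b) → Function.Injective φ → ∀ g : G, g = 1

end SMN

namespace SMN


open Function

/-- In a finite nilpotent group, the `e`-th power map is a homomorphism whenever
`e` is `1` mod the `p`-part of `|G|` and `0` mod the rest. -/
theorem pow_e_hom {G : Type*} [Group G] [Finite G] (hnil : Group.IsNilpotent G)
    {p : ℕ} (hp : p.Prime) (e : ℕ)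
    (h1 : e ≡ 1 [MOD p ^ (Nat.card G).factorization p])
    (h0 : (Nat.card G) / p ^ (Nat.card G).factorization p ∣ e)
    (g h : G) : (g * h) ^ e = g ^ e * h ^ e := by
  obtain ⟨φ⟩ := ((isNilpotent_of_finite_tfae (G := G)).out 0 4).mp hnil
  have hM : Nat.card G ≠ 0 := Nat.card_pos.ne'
  have comp : ∀ (q : (Nat.card G).primeFactors) (P : Sylow q G)
      (z : (↑P : Subgroup G)), z ^ e = if (q : ℕ) = p then z else 1 := by
    intro q P z
    have hqprime : Nat.Prime (q : ℕ) := Nat.prime_of_mem_primeFactors q.2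
    haveI : Fact (Nat.Prime (q : ℕ)) := ⟨hqprime⟩
    obtain ⟨k, hk⟩ := (IsPGroup.iff_orderOf.mp P.isPGroup') z
    have hdvdM : orderOf z ∣ Nat.card G := by
      rw [← Subgroup.orderOf_coe]
      exact orderOf_dvd_natCard _
    by_cases hqp : (q : ℕ) = p
    · rw [if_pos hqp]
      have hkdvd : orderOf z ∣ p ^ (Nat.card G).factorization p := by
        rw [hk, hqp] at hdvdM ⊢
        exact pow_dvd_pow p ((hp.pow_dvd_iff_le_factorization hM).mp hdvdM)
      have : e ≡ 1 [MOD orderOf z] := h1.of_dvd hkdvd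
      calc z ^ e = z ^ 1 := pow_eq_pow_iff_modEq.mpr this
        _ = z := pow_one z
    · rw [if_neg hqp]
      have hco : Nat.Coprime (orderOf z) (p ^ (Nat.card G).factorization p) := by
        rw [hk]
        exact Nat.Coprime.pow _ _ ((Nat.coprime_primes hqprime hp).mpr hqp)
      have hdvd' : orderOf z ∣ (Nat.card G) / p ^ (Nat.card G).factorization p := by
        refine hco.dvd_of_dvd_mul_left ?_
        rw [Nat.ordProj_mul_ordCompl_eq_self (Nat.card G) p]
        exact hdvdM
      exact orderOf_dvd_iff_pow_eq_one.mp (hdvd'.trans h0)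
  have compmul : ∀ (q : (Nat.card G).primeFactors) (P : Sylow q G)
      (z₁ z₂ : (↑P : Subgroup G)), (z₁ * z₂) ^ e = z₁ ^ e * z₂ ^ e := by
    intro q P z₁ z₂
    rw [comp q P z₁, comp q P z₂, comp q P (z₁ * z₂)]
    split_ifs <;> simp
  have prodmul : ∀ x y : (∀ q : (Nat.card G).primeFactors, ∀ P : Sylow q G,
      (↑P : Subgroup G)), (x * y) ^ e = x ^ e * y ^ e := by
    intro x y
    funext q P
    simpa using compmul q P (x q P) (y q P)
  calc (g * h) ^ e = (φ (φ.symm g * φ.symm h)) ^ e := by simp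
    _ = φ ((φ.symm g * φ.symm h) ^ e) := (map_pow φ _ e).symm
    _ = φ ((φ.symm g) ^ e * (φ.symm h) ^ e) := by rw [prodmul]
    _ = g ^ e * h ^ e := by simp [map_pow]

theorem perm_fix_pow {Q : Type*} {σ : Equiv.Perm Q} {x : Q} (h : σ x = x) (t : ℕ) :
    (σ ^ t) x = x := by
  induction t with
  | zero => simp
  | succ t ih => rw [pow_succ', Equiv.Perm.mul_apply, ih, h]


set_option maxHeartbeats 1000000 in
/-- For `n` with at least two distinct prime divisors, there is no finite set `Q`,
permutations `f_a, f_b` of `Q` generating a nilpotent group, and distinct points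
`q₁, …, q_{n+1}` (0-indexed below) with `f_a(q_i) = f_b(q_i) = q_{i+1}` for
`1 ≤ i ≤ n−1`, `f_a(q_n) = q₁` and `f_b(q_{n+1}) = q₁`; i.e. the inverse automaton
`A_n` is not `G_nil`-extendible. -/
theorem stmt17 (n : ℕ) (hn : 1 ≤ n)
    (hpq : ∃ p q : ℕ, p.Prime ∧ q.Prime ∧ p ≠ q ∧ p ∣ n ∧ q ∣ n) :
    ¬ ∃ (Q : Type) (_ : Finite Q) (fa fb : Equiv.Perm Q),
        Group.IsNilpotent (Subgroup.closure {fa, fb} : Subgroup (Equiv.Perm Q)) ∧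
        ∃ q : Fin (n + 1) → Q, Function.Injective q ∧
          (∀ i : ℕ, ∀ h : i + 1 < n,
            fa (q ⟨i, by omega⟩) = q ⟨i + 1, by omega⟩ ∧
            fb (q ⟨i, by omega⟩) = q ⟨i + 1, by omega⟩) ∧
          fa (q ⟨n - 1, by omega⟩) = q ⟨0, by omega⟩ ∧
          fb (q ⟨n, by omega⟩) = q ⟨0, by omega⟩ := by
  rintro ⟨Q, hQfin, fa, fb, hnil, q, hqinj, hmid, hfa, hfb⟩
  obtain ⟨p₁, p₂, hp₁, hp₂, hp12, hp₁n, hp₂n⟩ := hpq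
  have hn0 : n ≠ 0 := by omega
  have hn2 : 2 ≤ n := hp₁.two_le.trans (Nat.le_of_dvd (by omega) hp₁n)
  have hfaG : fa ∈ Subgroup.closure ({fa, fb} : Set (Equiv.Perm Q)) :=
    Subgroup.subset_closure (by simp)
  have hfbG : fb ∈ Subgroup.closure ({fa, fb} : Set (Equiv.Perm Q)) :=
    Subgroup.subset_closure (by simp)
  -- the walk along the path
  have F : ∀ i : ℕ, ∀ _hi : i < n, (fa ^ i) (q ⟨0, by omega⟩) = q ⟨i, by omega⟩ ∧
      (fb ^ i) (q ⟨0, by omega⟩) = q ⟨i, by omega⟩ := by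
    intro i
    induction i with
    | zero => intro _; constructor <;> simp
    | succ i ih =>
      intro hi
      obtain ⟨ha, hb⟩ := ih (by omega)
      obtain ⟨ha', hb'⟩ := hmid i hi
      constructor
      · rw [pow_succ', Equiv.Perm.mul_apply, ha]; exact ha'
      · rw [pow_succ', Equiv.Perm.mul_apply, hb]; exact hb'
  have hfan : (fa ^ n) (q ⟨0, by omega⟩) = q ⟨0, by omega⟩ := by
    have h1 : n - 1 < n := by omega
    have hsp : fa ^ n = fa * fa ^ (n - 1) := by rw [← pow_succ']; congr 1; omega
    rw [hsp, Equiv.Perm.mul_apply, (F (n - 1) h1).1]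
    exact hfa
  -- n divides the order of fa
  have hnord : n ∣ orderOf fa := by
    have hlt : orderOf fa % n < n := Nat.mod_lt _ (by omega)
    have hmod : (fa ^ (orderOf fa % n)) (q ⟨0, by omega⟩) = q ⟨0, by omega⟩ := by
      have hd : orderOf fa = orderOf fa % n + n * (orderOf fa / n) := by
        rw [Nat.mod_add_div]
      calc (fa ^ (orderOf fa % n)) (q ⟨0, by omega⟩)
          = (fa ^ (orderOf fa % n)) ((fa ^ (n * (orderOf fa / n))) (q ⟨0, by omega⟩)) := by
            rw [pow_mul, perm_fix_pow hfan]
        _ = (fa ^ orderOf fa) (q ⟨0, by omega⟩) := by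
            rw [← Equiv.Perm.mul_apply, ← pow_add, ← hd]
        _ = q ⟨0, by omega⟩ := by rw [pow_orderOf_eq_one]; rfl
    rcases Nat.eq_zero_or_pos (orderOf fa % n) with h0 | hpos
    · exact Nat.dvd_of_mod_eq_zero h0
    · exfalso
      rw [(F _ hlt).1] at hmod
      have := hqinj hmod
      rw [Fin.mk.injEq] at this
      omega
  have hMne : Nat.card ↥(Subgroup.closure ({fa, fb} : Set (Equiv.Perm Q))) ≠ 0 :=
    Nat.card_pos.ne'
  have horda : orderOf fa ∣ Nat.card ↥(Subgroup.closure ({fa, fb} : Set (Equiv.Perm Q))) :=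
    Subgroup.orderOf_dvd_natCard _ hfaG
  have hordb : orderOf fb ∣ Nat.card ↥(Subgroup.closure ({fa, fb} : Set (Equiv.Perm Q))) :=
    Subgroup.orderOf_dvd_natCard _ hfbG
  have hnM : n ∣ Nat.card ↥(Subgroup.closure ({fa, fb} : Set (Equiv.Perm Q))) :=
    hnord.trans horda
  -- minimal period of fb at q0
  set m := Function.minimalPeriod ⇑fb (q ⟨0, by omega⟩) with hmdef
  have hordbper : Function.IsPeriodicPt ⇑fb (orderOf fb) (q ⟨0, by omega⟩) := by
    show (⇑fb)^[orderOf fb] _ = _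
    rw [Equiv.Perm.iterate_eq_pow, pow_orderOf_eq_one]; rfl
  have hmpos : 0 < m :=
    Function.minimalPeriod_pos_of_mem_periodicPts
      ⟨orderOf fb, orderOf_pos fb, hordbper⟩
  have hm0 : m ≠ 0 := hmpos.ne'
  have hmM : m ∣ Nat.card ↥(Subgroup.closure ({fa, fb} : Set (Equiv.Perm Q))) :=
    hordbper.minimalPeriod_dvd.trans hordb
  -- per-prime bound
  have key : ∀ p : ℕ, p.Prime → m.factorization p ≤ n.factorization p := by
    intro p hp
    by_cases hpm : p ∣ m
    case neg => rw [Nat.factorization_eq_zero_of_not_dvd hpm]; exact Nat.zero_le _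
    have hpM : p ∣ Nat.card ↥(Subgroup.closure ({fa, fb} : Set (Equiv.Perm Q))) :=
      hpm.trans hmM
    set M := Nat.card ↥(Subgroup.closure ({fa, fb} : Set (Equiv.Perm Q))) with hMdef
    set a := M.factorization p with hadef
    have hco : Nat.Coprime (p ^ a) (M / p ^ a) :=
      Nat.Coprime.pow_left a (Nat.coprime_ordCompl hp hMne)
    obtain ⟨e, he1, he0'⟩ := Nat.chineseRemainder hco 1 0
    have he0 : M / p ^ a ∣ e := Nat.modEq_zero_iff_dvd.mp he0'
    have hapos : 0 < a := hp.factorization_pos_of_dvd hMne hpM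
    have hape : ¬ p ∣ e := by
      intro hpe
      have h1 : e ≡ 1 [MOD p] := he1.of_dvd (dvd_pow_self p hapos.ne')
      have h2 : (1 : ℕ) ≡ 0 [MOD p] := h1.symm.trans (Nat.modEq_zero_iff_dvd.mpr hpe)
      have h3 : p ∣ 1 := Nat.modEq_zero_iff_dvd.mp h2
      have := Nat.le_of_dvd one_pos h3
      have := hp.two_le
      omega
    have he_ne : e ≠ 0 := fun h => hape (h ▸ dvd_zero p)
    set r := p ^ n.factorization p with hrdef
    set s := n / r with hsdef
    have hrs : r * s = n := Nat.ordProj_mul_ordCompl_eq_self n p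
    have hrpos : 0 < r := pow_pos hp.pos _
    -- there is a prime t ≠ p dividing n, so s ≥ 2
    obtain ⟨t, htp, htne, htn⟩ : ∃ t, t.Prime ∧ t ≠ p ∧ t ∣ n := by
      by_cases h : p₁ = p
      · exact ⟨p₂, hp₂, fun hc => hp12 (h.trans hc.symm), hp₂n⟩
      · exact ⟨p₁, hp₁, h, hp₁n⟩
    have hts : t ∣ s := by
      have hctr : Nat.Coprime t r :=
        Nat.Coprime.pow_right _ ((Nat.coprime_primes htp hp).mpr htne)
      exact (hctr.dvd_mul_left).mp (hrs ▸ htn)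
    have hspos : 0 < s := by
      rcases Nat.eq_zero_or_pos s with h | h
      · exfalso; rw [h, mul_zero] at hrs; omega
      · exact h
    have hs2 : 2 ≤ s := htp.two_le.trans (Nat.le_of_dvd hspos hts)
    have hrn : r < n := by nlinarith [hrs, hrpos, hs2]
    -- s divides e
    have hse : s ∣ e := by
      have hsM : s ∣ M := (Dvd.intro_left r hrs).trans hnM
      have hcos : Nat.Coprime s (p ^ a) :=
        Nat.Coprime.pow_right a ((Nat.coprime_ordCompl hp hn0).symm)
      have h5 : s ∣ p ^ a * (M / p ^ a) := by
        rw [Nat.ordProj_mul_ordCompl_eq_self M p]; exact hsM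
      exact ((hcos.dvd_mul_left).mp h5).trans he0
    have hner : n ∣ e * r := by
      obtain ⟨c, hc⟩ := hse
      exact ⟨c, by rw [← hrs, hc]; ring⟩
    have hfix : (fa ^ (e * r)) (q ⟨0, by omega⟩) = q ⟨0, by omega⟩ := by
      obtain ⟨c, hc⟩ := hner
      rw [hc, pow_mul]
      exact perm_fix_pow hfan c
    have hragree : (fb ^ r) (q ⟨0, by omega⟩) = (fa ^ r) (q ⟨0, by omega⟩) := by
      rw [(F r hrn).1, (F r hrn).2]
    -- move to the subgroup
    set X : ↥(Subgroup.closure ({fa, fb} : Set (Equiv.Perm Q))) := ⟨fa, hfaG⟩ with hXdef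
    set Y : ↥(Subgroup.closure ({fa, fb} : Set (Equiv.Perm Q))) := ⟨fb, hfbG⟩ with hYdef
    have hXcoe : ((X : ↥(Subgroup.closure ({fa, fb} : Set (Equiv.Perm Q)))) : Equiv.Perm Q) = fa := rfl
    have hYcoe : ((Y : ↥(Subgroup.closure ({fa, fb} : Set (Equiv.Perm Q)))) : Equiv.Perm Q) = fb := rfl
    have hWpow : ((Y ^ r)⁻¹ * X ^ r) ^ e = (Y ^ (r * e))⁻¹ * X ^ (r * e) := by
      rw [pow_e_hom hnil hp e he1 he0 (Y ^ r)⁻¹ (X ^ r), inv_pow, ← pow_mul, ← pow_mul]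
    have hfix0 : ((fb ^ r)⁻¹ * fa ^ r) (q ⟨0, by omega⟩) = q ⟨0, by omega⟩ := by
      rw [Equiv.Perm.mul_apply, ← hragree, Equiv.Perm.inv_def, Equiv.symm_apply_apply]
    have hfixe : ((fb ^ (r * e))⁻¹ * fa ^ (r * e)) (q ⟨0, by omega⟩) = q ⟨0, by omega⟩ := by
      have h2 : ((fb ^ (r * e))⁻¹ * fa ^ (r * e) : Equiv.Perm Q)
          = (((Y ^ (r * e))⁻¹ * X ^ (r * e) :
              ↥(Subgroup.closure ({fa, fb} : Set (Equiv.Perm Q)))) : Equiv.Perm Q) := by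
        push_cast [hXcoe, hYcoe]
        rfl
      have h3 : ((((Y ^ r)⁻¹ * X ^ r) ^ e :
            ↥(Subgroup.closure ({fa, fb} : Set (Equiv.Perm Q)))) : Equiv.Perm Q)
          = ((fb ^ r)⁻¹ * fa ^ r : Equiv.Perm Q) ^ e := by
        push_cast [hXcoe, hYcoe]
        rfl
      rw [h2, ← hWpow, h3]
      exact perm_fix_pow hfix0 e
    have hfbfix : (fb ^ (r * e)) (q ⟨0, by omega⟩) = q ⟨0, by omega⟩ := by
      rw [Equiv.Perm.mul_apply] at hfixe
      rw [mul_comm e r] at hfix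
      rw [hfix] at hfixe
      have h4 := congrArg ⇑(fb ^ (r * e)) hfixe
      rw [Equiv.Perm.inv_def, Equiv.apply_symm_apply] at h4
      exact h4.symm
    have hmre : m ∣ r * e := by
      apply Function.IsPeriodicPt.minimalPeriod_dvd
      show (⇑fb)^[r * e] _ = _
      rw [Equiv.Perm.iterate_eq_pow]
      exact hfbfix
    have hre0 : r * e ≠ 0 := by positivity
    have h6 := Finsupp.le_def.mp ((Nat.factorization_le_iff_dvd hm0 hre0).mpr hmre) p
    rw [Nat.factorization_mul hrpos.ne' he_ne, Finsupp.add_apply,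
      Nat.factorization_eq_zero_of_not_dvd hape, hrdef,
      hp.factorization_pow, Finsupp.single_eq_same] at h6
    omega
  -- m divides n
  have hmn : m ∣ n := by
    rw [← Nat.factorization_le_iff_dvd hm0 hn0, Finsupp.le_def]
    intro p
    by_cases hp : p.Prime
    · exact key p hp
    · rw [Nat.factorization_eq_zero_of_not_prime _ hp]; exact Nat.zero_le _
  have hfbn : (fb ^ n) (q ⟨0, by omega⟩) = q ⟨0, by omega⟩ := by
    have h5 : Function.IsPeriodicPt ⇑fb n (q ⟨0, by omega⟩) :=
      Function.isPeriodicPt_iff_minimalPeriod_dvd.mpr hmn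
    have h6 : (⇑fb)^[n] (q ⟨0, by omega⟩) = q ⟨0, by omega⟩ := h5
    rwa [Equiv.Perm.iterate_eq_pow] at h6
  have h7 : fb (q ⟨n - 1, by omega⟩) = q ⟨0, by omega⟩ := by
    have hsp : fb ^ n = fb * fb ^ (n - 1) := by rw [← pow_succ']; congr 1; omega
    rw [hsp, Equiv.Perm.mul_apply, (F (n - 1) (by omega)).2] at hfbn
    exact hfbn
  have h8 : q (⟨n - 1, by omega⟩ : Fin (n + 1)) = q ⟨n, by omega⟩ :=
    fb.injective (h7.trans hfb.symm)
  have h9 := hqinj h8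
  rw [Fin.mk.injEq] at h9
  omega


end SMN
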